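/- For the cyclic shuffle given by permuting batches cyclically (A_j^{t+1} = A_{j-1 mod K}^t), any achievable rate satisfies R ≥ ((K-1)/K)·N, where rate is measured in units of data points with i.i.d. points of entropy d. -/

import Mathlib

open Finset

/-- Shannon entropy (in nats) of a random variable `X` on a finite probability
space with mass function `μ`. -/
noncomputable def ent {Ω : Type*} [Fintype Ω] {α : Type*} [Fintype α] [DecidableEq α]
    (μ : Ω → ℝ) (X : Ω → α) : ℝ :=
  - ∑ a : α, (∑ ω ∈ Finset.univ.filter (fun ω => X ω = a), μ ω) *
      Real.log (∑ ω ∈ Finset.univ.filter (fun ω => X ω = a), μ ω)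

/-- Conditional entropy `H(X | Y) = H(X, Y) - H(Y)`. -/
noncomputable def condEnt {Ω : Type*} [Fintype Ω] {α β : Type*}
    [Fintype α] [DecidableEq α] [Fintype β] [DecidableEq β]
    (μ : Ω → ℝ) (X : Ω → α) (Y : Ω → β) : ℝ :=
  ent μ (fun ω => (X ω, Y ω)) - ent μ Y

/-- Mutual information `I(X ; Y) = H(X) + H(Y) - H(X, Y)`. -/
noncomputable def mutInfo {Ω : Type*} [Fintype Ω] {α β : Type*}
    [Fintype α] [DecidableEq α] [Fintype β] [DecidableEq β]
    (μ : Ω → ℝ) (X : Ω → α) (Y : Ω → β) : ℝ :=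
  ent μ X + ent μ Y - ent μ (fun ω => (X ω, Y ω))

noncomputable def pm {Ω : Type*} [Fintype Ω] {α : Type*} [Fintype α] [DecidableEq α]
    (μ : Ω → ℝ) (X : Ω → α) (a : α) : ℝ :=
  ∑ ω ∈ Finset.univ.filter (fun ω => X ω = a), μ ω

variable {Ω : Type*} [Fintype Ω] {α β γ' : Type*} [Fintype α] [DecidableEq α]
  [Fintype β] [DecidableEq β] [Fintype γ'] [DecidableEq γ'] {μ : Ω → ℝ}

lemma ent_eq (μ : Ω → ℝ) (X : Ω → α) :
    ent μ X = - ∑ a : α, pm μ X a * Real.log (pm μ X a) := rfl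

lemma pm_nonneg (hμ0 : ∀ ω, 0 ≤ μ ω) (X : Ω → α) (a : α) : 0 ≤ pm μ X a :=
  Finset.sum_nonneg fun ω _ => hμ0 ω

lemma sum_pm (μ : Ω → ℝ) (X : Ω → α) : ∑ a : α, pm μ X a = ∑ ω, μ ω :=
  Finset.sum_fiberwise _ _ _

lemma pm_comp (μ : Ω → ℝ) (X : Ω → α) (h : α → β) (b : β) :
    pm μ (fun ω => h (X ω)) b = ∑ a ∈ univ.filter (fun a => h a = b), pm μ X a := by
  rw [pm, ← Finset.sum_fiberwise_of_maps_to
    (g := X) (t := univ.filter fun a => h a = b)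
    (fun ω hω => by simpa using (Finset.mem_filter.mp hω).2) μ]
  refine Finset.sum_congr rfl fun a ha => ?_
  rw [pm]
  congr 1
  ext ω
  simp only [Finset.mem_filter, Finset.mem_univ, true_and] at ha ⊢
  constructor
  · rintro ⟨_, h2⟩; exact h2
  · intro h2; exact ⟨by rw [h2, ha], h2⟩
-- assume t1 content pasted; for speed test separately with minimal context
lemma gibbs {ι : Type*} (s : Finset ι) (f g : ι → ℝ) (hf : ∀ i ∈ s, 0 ≤ f i)
    (hg : ∀ i ∈ s, 0 ≤ g i) (hfg : ∀ i ∈ s, 0 < f i → 0 < g i)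
    (hsum : ∑ i ∈ s, g i ≤ ∑ i ∈ s, f i) :
    ∑ i ∈ s, f i * Real.log (g i) ≤ ∑ i ∈ s, f i * Real.log (f i) := by
  have key : ∀ i ∈ s, f i * Real.log (g i) - f i * Real.log (f i) ≤ g i - f i := by
    intro i hi
    rcases eq_or_lt_of_le (hf i hi) with h0 | h0
    · simp [← h0]; exact hg i hi
    · have hgi := hfg i hi h0
      have hlog : Real.log (g i) - Real.log (f i) = Real.log (g i / f i) :=
        (Real.log_div hgi.ne' h0.ne').symm
      have h1 : Real.log (g i / f i) ≤ g i / f i - 1 :=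
        Real.log_le_sub_one_of_pos (div_pos hgi h0)
      have h2 : f i * Real.log (g i / f i) ≤ f i * (g i / f i - 1) :=
        mul_le_mul_of_nonneg_left h1 h0.le
      have h3 : f i * (g i / f i - 1) = g i - f i := by
        field_simp
      calc f i * Real.log (g i) - f i * Real.log (f i)
          = f i * (Real.log (g i) - Real.log (f i)) := by ring
        _ = f i * Real.log (g i / f i) := by rw [hlog]
        _ ≤ f i * (g i / f i - 1) := h2
        _ = g i - f i := h3
  have := Finset.sum_le_sum key
  rw [Finset.sum_sub_distrib, Finset.sum_sub_distrib] at this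
  linarith

lemma pm_le_comp (hμ0 : ∀ ω, 0 ≤ μ ω) (X : Ω → α) (h : α → β) (a : α) :
    pm μ X a ≤ pm μ (fun ω => h (X ω)) (h a) := by
  rw [pm_comp μ X h (h a)]
  exact Finset.single_le_sum (fun a' _ => pm_nonneg hμ0 X a')
    (Finset.mem_filter.mpr ⟨Finset.mem_univ a, rfl⟩)

lemma ent_comp_le (hμ0 : ∀ ω, 0 ≤ μ ω) (X : Ω → α) (h : α → β) :
    ent μ (fun ω => h (X ω)) ≤ ent μ X := by
  rw [ent_eq, ent_eq, neg_le_neg_iff]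
  calc ∑ a : α, pm μ X a * Real.log (pm μ X a)
      ≤ ∑ a : α, pm μ X a * Real.log (pm μ (fun ω => h (X ω)) (h a)) := by
        refine Finset.sum_le_sum fun a _ => ?_
        rcases eq_or_lt_of_le (pm_nonneg hμ0 X a) with h0 | h0
        · rw [← h0]; simp
        · exact mul_le_mul_of_nonneg_left
            (Real.log_le_log h0 (pm_le_comp hμ0 X h a)) h0.le
    _ = ∑ b : β, ∑ a ∈ univ.filter (fun a => h a = b),
          pm μ X a * Real.log (pm μ (fun ω => h (X ω)) (h a)) :=
        (Finset.sum_fiberwise _ _ _).symm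
    _ = ∑ b : β, pm μ (fun ω => h (X ω)) b * Real.log (pm μ (fun ω => h (X ω)) b) := by
        refine Finset.sum_congr rfl fun b _ => ?_
        rw [pm_comp μ X h b, Finset.sum_mul]
        refine Finset.sum_congr rfl fun a ha => ?_
        rw [(Finset.mem_filter.mp ha).2, pm_comp μ X h b]

lemma ent_congr (hμ0 : ∀ ω, 0 ≤ μ ω) {X : Ω → α} {Y : Ω → β} (f : α → β) (g : β → α)
    (hf : ∀ ω, Y ω = f (X ω)) (hg : ∀ ω, X ω = g (Y ω)) :
    ent μ X = ent μ Y := by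
  have h1 : ent μ X ≤ ent μ Y := by
    rw [show X = fun ω => g (Y ω) from funext hg]; exact ent_comp_le hμ0 Y g
  have h2 : ent μ Y ≤ ent μ X := by
    rw [show Y = fun ω => f (X ω) from funext hf]; exact ent_comp_le hμ0 X f
  linarith

lemma pm_sum_snd (μ : Ω → ℝ) (X : Ω → α) (Y : Ω → β) (a : α) :
    ∑ b : β, pm μ (fun ω => (X ω, Y ω)) (a, b) = pm μ X a := by
  rw [pm, ← Finset.sum_fiberwise (univ.filter fun ω => X ω = a) Y μ]
  refine Finset.sum_congr rfl fun b _ => ?_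
  rw [pm]
  congr 1
  ext ω
  simp [Prod.ext_iff, and_comm]

lemma pm_sum_fst (μ : Ω → ℝ) (X : Ω → α) (Y : Ω → β) (b : β) :
    ∑ a : α, pm μ (fun ω => (X ω, Y ω)) (a, b) = pm μ Y b := by
  rw [pm, ← Finset.sum_fiberwise (univ.filter fun ω => Y ω = b) X μ]
  refine Finset.sum_congr rfl fun a _ => ?_
  rw [pm]
  congr 1
  ext ω
  simp [Prod.ext_iff, and_comm]

lemma ent_pair_le (hμ0 : ∀ ω, 0 ≤ μ ω) (hμ1 : ∑ ω, μ ω = 1) (X : Ω → α) (Y : Ω → β) :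
    ent μ (fun ω => (X ω, Y ω)) ≤ ent μ X + ent μ Y := by
  set q := pm μ (fun ω => (X ω, Y ω)) with hq
  set p := pm μ X with hp
  set r := pm μ Y with hr
  have hqn : ∀ z, 0 ≤ q z := pm_nonneg hμ0 _
  have hpn : ∀ a, 0 ≤ p a := pm_nonneg hμ0 _
  have hrn : ∀ b, 0 ≤ r b := pm_nonneg hμ0 _
  have hqp : ∀ a b, q (a, b) ≤ p a := fun a b => by
    rw [hp, ← pm_sum_snd μ X Y a]
    exact Finset.single_le_sum (fun b' _ => hqn _) (Finset.mem_univ b)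
  have hqr : ∀ a b, q (a, b) ≤ r b := fun a b => by
    rw [hr, ← pm_sum_fst μ X Y b]
    exact Finset.single_le_sum (f := fun a' => pm μ (fun ω => (X ω, Y ω)) (a', b))
      (fun a' _ => hqn _) (Finset.mem_univ a)
  have hgib : ∑ z : α × β, q z * Real.log (p z.1 * r z.2) ≤
      ∑ z : α × β, q z * Real.log (q z) := by
    refine gibbs _ _ _ (fun z _ => hqn z)
      (fun z _ => mul_nonneg (hpn _) (hrn _))
      (fun z _ hz => mul_pos (lt_of_lt_of_le hz (hqp z.1 z.2))
        (lt_of_lt_of_le hz (hqr z.1 z.2))) (le_of_eq ?_)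
    rw [Fintype.sum_prod_type]
    calc ∑ a : α, ∑ b : β, p a * r b = (∑ a, p a) * ∑ b, r b := by
          rw [Finset.sum_mul]
          exact Finset.sum_congr rfl fun a _ => by rw [Finset.mul_sum]
      _ = 1 := by rw [hp, hr, sum_pm, sum_pm, hμ1, mul_one]
      _ = ∑ z : α × β, q z := by rw [hq, sum_pm, hμ1]
  have hsplit : ∑ z : α × β, q z * Real.log (p z.1 * r z.2) =
      (∑ a : α, p a * Real.log (p a)) + ∑ b : β, r b * Real.log (r b) := by
    have e1 : ∀ z : α × β, q z * Real.log (p z.1 * r z.2) =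
        q z * Real.log (p z.1) + q z * Real.log (r z.2) := by
      intro z
      rcases eq_or_lt_of_le (hqn z) with h0 | h0
      · rw [← h0]; ring
      · have hpa : p z.1 ≠ 0 := (lt_of_lt_of_le h0 (hqp z.1 z.2)).ne'
        have hrb : r z.2 ≠ 0 := (lt_of_lt_of_le h0 (hqr z.1 z.2)).ne'
        rw [Real.log_mul hpa hrb]; ring
    rw [Finset.sum_congr rfl fun z _ => e1 z, Finset.sum_add_distrib]
    congr 1
    · rw [Fintype.sum_prod_type]
      refine Finset.sum_congr rfl fun a _ => ?_
      have e2 : ∀ y : β, q (a, y) * Real.log (p (a, y).1) =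
          q (a, y) * Real.log (p a) := fun y => rfl
      rw [Finset.sum_congr rfl fun y _ => e2 y, ← Finset.sum_mul, pm_sum_snd μ X Y a]
    · rw [Fintype.sum_prod_type_right]
      refine Finset.sum_congr rfl fun b _ => ?_
      have e2 : ∀ a : α, q (a, b) * Real.log (r (a, b).2) =
          q (a, b) * Real.log (r b) := fun a => rfl
      rw [Finset.sum_congr rfl fun a _ => e2 a, ← Finset.sum_mul, pm_sum_fst μ X Y b]
  rw [ent_eq, ent_eq, ent_eq]
  have := hsplit ▸ hgib
  linarith

lemma sum_pm_mul_log_comp (μ : Ω → ℝ) (X : Ω → α) (h : α → β) :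
    ∑ a : α, pm μ X a * Real.log (pm μ (fun ω => h (X ω)) (h a)) =
      ∑ b : β, pm μ (fun ω => h (X ω)) b * Real.log (pm μ (fun ω => h (X ω)) b) := by
  rw [← Finset.sum_fiberwise univ h
    (fun a => pm μ X a * Real.log (pm μ (fun ω => h (X ω)) (h a)))]
  refine Finset.sum_congr rfl fun b _ => ?_
  rw [pm_comp μ X h b, Finset.sum_mul]
  refine Finset.sum_congr rfl fun a ha => ?_
  rw [(Finset.mem_filter.mp ha).2, pm_comp μ X h b]

lemma ent_ssa (hμ0 : ∀ ω, 0 ≤ μ ω) (hμ1 : ∑ ω, μ ω = 1)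
    (A : Ω → α) (B : Ω → β) (C : Ω → γ') :
    ent μ (fun ω => ((A ω, B ω), C ω)) + ent μ B
      ≤ ent μ (fun ω => (A ω, B ω)) + ent μ (fun ω => (B ω, C ω)) := by
  classical
  set tr : Ω → (α × β) × γ' := fun ω => ((A ω, B ω), C ω) with htr
  set T : (α × β) × γ' → ℝ := pm μ tr with hT
  set u : α × β → ℝ := pm μ (fun ω => (tr ω).1) with hu'
  set v : β × γ' → ℝ := pm μ (fun ω => ((tr ω).1.2, (tr ω).2)) with hv'
  set w : β → ℝ := pm μ (fun ω => (tr ω).1.2) with hw'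
  have hTn : ∀ z, 0 ≤ T z := pm_nonneg hμ0 _
  have hun : ∀ p, 0 ≤ u p := pm_nonneg hμ0 _
  have hvn : ∀ q, 0 ≤ v q := pm_nonneg hμ0 _
  have hwn : ∀ b, 0 ≤ w b := pm_nonneg hμ0 _
  have hTu : ∀ z : (α × β) × γ', T z ≤ u z.1 := fun z =>
    pm_le_comp hμ0 tr Prod.fst z
  have hTv : ∀ z : (α × β) × γ', T z ≤ v (z.1.2, z.2) := fun z =>
    pm_le_comp hμ0 tr (fun y => (y.1.2, y.2)) z
  have huw : ∀ p : α × β, u p ≤ w p.2 := fun p =>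
    pm_le_comp hμ0 (fun ω => (tr ω).1) Prod.snd p
  -- marginals
  have hmu : ∀ p : α × β, ∑ c : γ', T (p, c) = u p := fun p =>
    pm_sum_snd μ (fun ω => (A ω, B ω)) C p
  have hmw2 : ∀ b : β, ∑ c : γ', v (b, c) = w b := fun b =>
    pm_sum_snd μ B C b
  have hmw : ∀ b : β, ∑ a : α, u (a, b) = w b := fun b =>
    pm_sum_fst μ A B b
  have hmv : ∀ (b : β) (c : γ'), ∑ a : α, T ((a, b), c) = v (b, c) := by
    intro b c
    have : v (b, c) = ∑ ω ∈ univ.filter (fun ω => (B ω, C ω) = (b, c)), μ ω := rfl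
    rw [this, ← Finset.sum_fiberwise (univ.filter fun ω => (B ω, C ω) = (b, c)) A μ]
    refine Finset.sum_congr rfl fun a _ => ?_
    have : T ((a, b), c) =
        ∑ ω ∈ univ.filter (fun ω => ((A ω, B ω), C ω) = ((a, b), c)), μ ω := rfl
    rw [this, Finset.filter_filter]
    congr 1
    ext ω
    simp only [Finset.mem_filter, Finset.mem_univ, true_and, Prod.mk.injEq]
    tauto
  -- Gibbs inequality
  have hgib : ∑ z : (α × β) × γ', T z * Real.log (u z.1 * v (z.1.2, z.2) / w z.1.2)
      ≤ ∑ z : (α × β) × γ', T z * Real.log (T z) := by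
    refine gibbs _ _ _ (fun z _ => hTn z)
      (fun z _ => div_nonneg (mul_nonneg (hun _) (hvn _)) (hwn _))
      (fun z _ hz => ?_) ?_
    · exact div_pos (mul_pos (lt_of_lt_of_le hz (hTu z)) (lt_of_lt_of_le hz (hTv z)))
        (lt_of_lt_of_le (lt_of_lt_of_le hz (hTu z)) (huw z.1))
    · rw [Fintype.sum_prod_type]
      have step1 : ∀ p : α × β,
          ∑ c : γ', u (p, c).1 * v ((p, c).1.2, (p, c).2) / w (p, c).1.2
            = u p * w p.2 / w p.2 := by
        intro p
        have : ∀ c : γ', u (p, c).1 * v ((p, c).1.2, (p, c).2) / w (p, c).1.2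
            = u p * v (p.2, c) / w p.2 := fun c => rfl
        rw [Finset.sum_congr rfl fun c _ => this c, ← Finset.sum_div, ← Finset.mul_sum,
          hmw2 p.2]
      rw [Finset.sum_congr rfl fun p _ => step1 p, Fintype.sum_prod_type_right]
      have step2 : ∀ b : β, ∑ a : α, u (a, b) * w (a, b).2 / w (a, b).2 ≤ w b := by
        intro b
        have : ∀ a : α, u (a, b) * w (a, b).2 / w (a, b).2
            = u (a, b) * w b / w b := fun a => rfl
        rw [Finset.sum_congr rfl fun a _ => this a, ← Finset.sum_div, ← Finset.sum_mul,
          hmw b]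
        rcases eq_or_ne (w b) 0 with h | h
        · simp [h]
        · rw [mul_div_assoc, div_self h, mul_one]
      calc ∑ b : β, ∑ a : α, u (a, b) * w (a, b).2 / w (a, b).2
          ≤ ∑ b : β, w b := Finset.sum_le_sum fun b _ => step2 b
        _ = 1 := by rw [hw', sum_pm, hμ1]
        _ = ∑ z : (α × β) × γ', T z := by rw [hT, sum_pm, hμ1]
  -- split log
  have hsplit : ∑ z : (α × β) × γ', T z * Real.log (u z.1 * v (z.1.2, z.2) / w z.1.2)
      = (∑ z : (α × β) × γ', T z * Real.log (u z.1))
        + (∑ z : (α × β) × γ', T z * Real.log (v (z.1.2, z.2)))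
        - ∑ z : (α × β) × γ', T z * Real.log (w z.1.2) := by
    rw [← Finset.sum_add_distrib, ← Finset.sum_sub_distrib]
    refine Finset.sum_congr rfl fun z _ => ?_
    rcases eq_or_lt_of_le (hTn z) with h0 | h0
    · rw [← h0]; ring
    · have h1 : u z.1 ≠ 0 := (lt_of_lt_of_le h0 (hTu z)).ne'
      have h2 : v (z.1.2, z.2) ≠ 0 := (lt_of_lt_of_le h0 (hTv z)).ne'
      have h3 : w z.1.2 ≠ 0 := (lt_of_lt_of_le (lt_of_lt_of_le h0 (hTu z)) (huw z.1)).ne'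
      rw [Real.log_div (mul_ne_zero h1 h2) h3, Real.log_mul h1 h2]
      ring
  -- identify the three sums
  have hS1 : ∑ z : (α × β) × γ', T z * Real.log (u z.1)
      = ∑ p : α × β, u p * Real.log (u p) :=
    sum_pm_mul_log_comp μ tr Prod.fst
  have hS2 : ∑ z : (α × β) × γ', T z * Real.log (v (z.1.2, z.2))
      = ∑ q : β × γ', v q * Real.log (v q) :=
    sum_pm_mul_log_comp μ tr (fun y => (y.1.2, y.2))
  have hS3 : ∑ z : (α × β) × γ', T z * Real.log (w z.1.2)
      = ∑ b : β, w b * Real.log (w b) :=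
    sum_pm_mul_log_comp μ tr (fun y => y.1.2)
  have eT : ent μ tr = - ∑ z : (α × β) × γ', T z * Real.log (T z) := rfl
  have eu : ent μ (fun ω => (A ω, B ω)) = - ∑ p : α × β, u p * Real.log (u p) := rfl
  have ev : ent μ (fun ω => (B ω, C ω)) = - ∑ q : β × γ', v q * Real.log (v q) := rfl
  have ew : ent μ B = - ∑ b : β, w b * Real.log (w b) := rfl
  rw [htr] at eT
  rw [eT, eu, ev, ew]
  rw [hsplit, hS1, hS2, hS3] at hgib
  linarith

lemma condEnt_nonneg (hμ0 : ∀ ω, 0 ≤ μ ω) (X : Ω → α) (Y : Ω → β) :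
    0 ≤ condEnt μ X Y := by
  have : ent μ Y ≤ ent μ (fun ω => (X ω, Y ω)) :=
    ent_comp_le hμ0 (fun ω => (X ω, Y ω)) Prod.snd
  rw [condEnt]; linarith

lemma condEnt_pair_le (hμ0 : ∀ ω, 0 ≤ μ ω) (hμ1 : ∑ ω, μ ω = 1)
    (X : Ω → α) (Y : Ω → β) (Z : Ω → γ') :
    condEnt μ X (fun ω => (Y ω, Z ω)) ≤ condEnt μ X Y := by
  have hassoc : ent μ (fun ω => (X ω, (Y ω, Z ω))) =
      ent μ (fun ω => ((X ω, Y ω), Z ω)) :=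
    ent_congr hμ0 (fun p => ((p.1, p.2.1), p.2.2)) (fun p => (p.1.1, (p.1.2, p.2)))
      (fun ω => rfl) (fun ω => rfl)
  have hssa := ent_ssa hμ0 hμ1 X Y Z
  rw [condEnt, condEnt, hassoc]
  linarith

lemma condEnt_comp_le (hμ0 : ∀ ω, 0 ≤ μ ω) (hμ1 : ∑ ω, μ ω = 1)
    (X : Ω → α) (Y : Ω → β) (h : β → γ') :
    condEnt μ X Y ≤ condEnt μ X (fun ω => h (Y ω)) := by
  have h1 : ent μ (fun ω => (X ω, Y ω)) =
      ent μ (fun ω => (X ω, (h (Y ω), Y ω))) :=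
    ent_congr hμ0 (fun p => (p.1, (h p.2, p.2))) (fun p => (p.1, p.2.2))
      (fun ω => rfl) (fun ω => rfl)
  have h2 : ent μ Y = ent μ (fun ω => (h (Y ω), Y ω)) :=
    ent_congr hμ0 (fun b => (h b, b)) (fun p => p.2) (fun ω => rfl) (fun ω => rfl)
  have h3 : condEnt μ X (fun ω => ((h (Y ω)), Y ω)) ≤ condEnt μ X (fun ω => h (Y ω)) :=
    condEnt_pair_le hμ0 hμ1 X (fun ω => h (Y ω)) Y
  rw [condEnt, condEnt] at h3 ⊢
  rw [h1, h2]
  exact h3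

open Fin.NatCast in
set_option maxHeartbeats 1000000 in
/-- Cyclic shuffle lower bound. `N` i.i.d. data points of entropy
`d > 0` each (i.i.d. formalized by: the joint entropy of any subset `T` of points
is `|T|·d`), partitioned into `K = n+1` batches `B k` of size `N/K` (`K ∣ N`). At
time `t+1` worker `j`'s batch equals worker `j-1`'s batch from time `t` (indices
mod `K`). A broadcast message `X` of entropy `R·d` allows each worker `j`, using
its old batch and `X`, to recover its new batch. Then `R ≥ ((K-1)/K)·N`. -/
theorem stmt18 {Ω γ χ : Type} [Fintype Ω] [Fintype γ] [DecidableEq γ]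
    [Fintype χ] [DecidableEq χ]
    (μ : Ω → ℝ) (hμ0 : ∀ ω, 0 ≤ μ ω) (hμ1 : ∑ ω, μ ω = 1)
    (N n : ℕ) (hdvd : (n + 1) ∣ N)
    (d : ℝ) (hd : 0 < d)
    (x : Fin N → Ω → γ)
    (hiid : ∀ T : Finset (Fin N),
      ent μ (fun ω => fun m : Fin N => if m ∈ T then some (x m ω) else none) =
        T.card * d)
    (B : Fin (n + 1) → Finset (Fin N))
    (hdisj : ∀ i j, i ≠ j → Disjoint (B i) (B j))
    (hcard : ∀ k, (B k).card = N / (n + 1))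
    (hcover : ∀ m : Fin N, ∃ k, m ∈ B k)
    (X : Ω → χ) (R : ℝ) (hX : ent μ X = R * d)
    (hdec : ∀ j : Fin (n + 1),
      condEnt μ
        (fun ω => fun m : Fin N => if m ∈ B (j - 1) then some (x m ω) else none)
        (fun ω =>
          ((fun m : Fin N => if m ∈ B j then some (x m ω) else none), X ω)) = 0) :
    R ≥ (((n : ℝ) + 1 - 1) / ((n : ℝ) + 1)) * N := by
  classical
  let U : Finset (Fin N) → Ω → (Fin N → Option γ) :=
    fun S ω m => if m ∈ S then some (x m ω) else none
  have hiid' : ∀ T : Finset (Fin N), ent μ (U T) = T.card * d := hiid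
  have hdec' : ∀ j : Fin (n + 1),
      condEnt μ (U (B (j - 1))) (fun ω => (U (B j) ω, X ω)) = 0 := hdec
  let idx : ℕ → Fin (n + 1) := fun i => -(i : Fin (n + 1))
  let W : ℕ → Finset (Fin N) := fun r => (Finset.range (r + 1)).biUnion fun i => B (idx i)
  have hW0 : W 0 = B 0 := by
    ext m
    simp [W, idx, Finset.mem_biUnion]
  have hWsucc : ∀ r, W (r + 1) = B (idx (r + 1)) ∪ W r := by
    intro r
    ext m
    simp only [W, Finset.mem_biUnion, Finset.mem_union, Finset.mem_range, Finset.range_add_one,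
      Finset.mem_insert]
    constructor
    · rintro ⟨i, hi | hi, hm⟩
      · exact Or.inl (hi ▸ hm)
      · exact Or.inr ⟨i, hi, hm⟩
    · rintro (hm | ⟨i, hi, hm⟩)
      · exact ⟨r + 1, Or.inl rfl, hm⟩
      · exact ⟨i, Or.inr hi, hm⟩
  have hBsubW : ∀ r, B (idx r) ⊆ W r := fun r m hm =>
    Finset.mem_biUnion.mpr ⟨r, Finset.mem_range.mpr (Nat.lt_succ_self r), hm⟩
  have hidx : ∀ r : ℕ, idx r - 1 = idx (r + 1) := by
    intro r
    show -(r : Fin (n + 1)) - 1 = -((r + 1 : ℕ) : Fin (n + 1))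
    push_cast
    rw [neg_add, sub_eq_add_neg]
  have hWn : W n = Finset.univ := by
    ext m
    simp only [Finset.mem_univ, iff_true]
    obtain ⟨k, hk⟩ := hcover m
    refine Finset.mem_biUnion.mpr ⟨(-k).val, Finset.mem_range.mpr (Nat.lt_succ_of_le
      (Nat.le_of_lt_succ (-k).isLt)), ?_⟩
    have : idx ((-k).val) = k := by
      show -(((-k).val : ℕ) : Fin (n + 1)) = k
      rw [Fin.cast_val_eq_self, neg_neg]
    rw [this]
    exact hk
  have hrestr : ∀ (S T : Finset (Fin N)), S ⊆ T → ∀ ω,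
      U S ω = (fun m => if m ∈ S then U T ω m else none) := by
    intro S T hST ω
    funext m
    by_cases hm : m ∈ S
    · simp only [U, hm, if_true, hST hm]
    · simp only [U, hm, if_false]
  have hstep : ∀ r : ℕ, ent μ (fun ω => (U (W (r + 1)) ω, X ω))
      = ent μ (fun ω => (U (W r) ω, X ω)) := by
    intro r
    set j : Fin (n + 1) := idx r with hj
    have hBj : B (j - 1) = B (idx (r + 1)) := by rw [hj, hidx]
    have hsub1 : B j ⊆ W r := hBsubW r
    have hsub2 : B (j - 1) ⊆ W (r + 1) := by
      rw [hBj, hWsucc]; exact Finset.subset_union_left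
    have hsub3 : W r ⊆ W (r + 1) := by
      rw [hWsucc]; exact Finset.subset_union_right
    have hz : condEnt μ (U (B (j - 1))) (fun ω => (U (W r) ω, X ω)) = 0 := by
      have hle : condEnt μ (U (B (j - 1))) (fun ω => (U (W r) ω, X ω)) ≤
          condEnt μ (U (B (j - 1)))
            (fun ω => ((fun m => if m ∈ B j then U (W r) ω m else none : Fin N → Option γ),
              X ω)) :=
        condEnt_comp_le hμ0 hμ1 (U (B (j - 1))) (fun ω => (U (W r) ω, X ω))
          (fun q => ((fun m => if m ∈ B j then q.1 m else none), q.2))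
      have heq : (fun ω =>
            ((fun m => if m ∈ B j then U (W r) ω m else none : Fin N → Option γ), X ω))
          = (fun ω => (U (B j) ω, X ω)) := by
        funext ω
        rw [← hrestr (B j) (W r) hsub1 ω]
      rw [heq] at hle
      have hge := condEnt_nonneg hμ0 (U (B (j - 1))) (fun ω => (U (W r) ω, X ω))
      have h0 : condEnt μ (U (B (j - 1))) (fun ω => (U (B j) ω, X ω)) = 0 := hdec' j
      linarith
    have hjoin : ent μ (fun ω => (U (W (r + 1)) ω, X ω))
        = ent μ (fun ω => (U (B (j - 1)) ω, (U (W r) ω, X ω))) := by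
      refine ent_congr hμ0
        (f := fun q : (Fin N → Option γ) × χ =>
          ((fun m => if m ∈ B (j - 1) then q.1 m else none : Fin N → Option γ),
            ((fun m => if m ∈ W r then q.1 m else none : Fin N → Option γ), q.2)))
        (g := fun p : (Fin N → Option γ) × ((Fin N → Option γ) × χ) =>
          ((fun m => if m ∈ B (j - 1) then p.1 m else p.2.1 m : Fin N → Option γ), p.2.2))
        ?_ ?_
      · intro ω
        show (U (B (j - 1)) ω, (U (W r) ω, X ω)) =
          ((fun m => if m ∈ B (j - 1) then U (W (r + 1)) ω m else none),
            ((fun m => if m ∈ W r then U (W (r + 1)) ω m else none), X ω))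
        rw [← hrestr (B (j - 1)) (W (r + 1)) hsub2 ω, ← hrestr (W r) (W (r + 1)) hsub3 ω]
      · intro ω
        show (U (W (r + 1)) ω, X ω) =
          ((fun m => if m ∈ B (j - 1) then U (B (j - 1)) ω m else U (W r) ω m), X ω)
        have hcomp : U (W (r + 1)) ω =
            (fun m => if m ∈ B (j - 1) then U (B (j - 1)) ω m else U (W r) ω m) := by
          funext m
          have hmem : m ∈ W (r + 1) ↔ m ∈ B (j - 1) ∨ m ∈ W r := by
            rw [hWsucc, hBj.symm, Finset.mem_union]
          by_cases hm1 : m ∈ B (j - 1)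
          · simp only [U, hm1, if_true, hmem.mpr (Or.inl hm1)]
          · by_cases hm2 : m ∈ W r
            · simp only [U, hm1, hm2, if_true, if_false, hmem.mpr (Or.inr hm2)]
            · have : m ∉ W (r + 1) := fun h => by
                rcases hmem.mp h with h' | h'
                · exact hm1 h'
                · exact hm2 h'
              simp only [U, hm1, hm2, this, if_false]
        rw [hcomp]
    have hz' : ent μ (fun ω => (U (B (j - 1)) ω, (U (W r) ω, X ω)))
        - ent μ (fun ω => (U (W r) ω, X ω)) = 0 := by
      have := hz
      rw [condEnt] at this
      exact this
    rw [hjoin]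
    linarith
  have hchain : ∀ r : ℕ, ent μ (fun ω => (U (W r) ω, X ω))
      = ent μ (fun ω => (U (B 0) ω, X ω)) := by
    intro r
    induction r with
    | zero => rw [hW0]
    | succ r ih => rw [hstep r, ih]
  have h2 : ent μ (U Finset.univ) ≤ ent μ (fun ω => (U Finset.univ ω, X ω)) :=
    ent_comp_le hμ0 (fun ω => (U Finset.univ ω, X ω)) Prod.fst
  have h3 : ent μ (fun ω => (U Finset.univ ω, X ω))
      = ent μ (fun ω => (U (W n) ω, X ω)) := by rw [hWn]
  have h5 : ent μ (fun ω => (U (B 0) ω, X ω)) ≤ ent μ (U (B 0)) + ent μ X :=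
    ent_pair_le hμ0 hμ1 _ _
  have h1 : ent μ (U Finset.univ) = (N : ℝ) * d := by
    rw [hiid' Finset.univ]
    congr 1
    simp
  have h6 : ent μ (U (B 0)) = ((N / (n + 1) : ℕ) : ℝ) * d := by
    rw [hiid' (B 0), hcard 0]
  have hn1 : ((n : ℝ) + 1) ≠ 0 := by positivity
  have hc : ((N / (n + 1) : ℕ) : ℝ) = (N : ℝ) / ((n : ℝ) + 1) := by
    rw [Nat.cast_div hdvd (by exact_mod_cast hn1)]
    push_cast
    ring
  have hmain : (N : ℝ) * d ≤ (N : ℝ) / ((n : ℝ) + 1) * d + R * d := by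
    rw [← hc, ← h6, ← hX, ← h1]
    calc ent μ (U Finset.univ) ≤ ent μ (fun ω => (U Finset.univ ω, X ω)) := h2
      _ = ent μ (fun ω => (U (B 0) ω, X ω)) := by rw [h3, hchain n]
      _ ≤ ent μ (U (B 0)) + ent μ X := h5
  have hR : (N : ℝ) - (N : ℝ) / ((n : ℝ) + 1) ≤ R := by
    have := sub_le_sub_right hmain ((N : ℝ) / ((n : ℝ) + 1) * d)
    rw [show (N : ℝ) / ((n : ℝ) + 1) * d + R * d - (N : ℝ) / ((n : ℝ) + 1) * d = R * d by ring]
      at this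
    have h' : ((N : ℝ) - (N : ℝ) / ((n : ℝ) + 1)) * d ≤ R * d := by
      rw [sub_mul]; linarith
    exact le_of_mul_le_mul_right (by linarith [h']) hd
  have hfin : (((n : ℝ) + 1 - 1) / ((n : ℝ) + 1)) * N
      = (N : ℝ) - (N : ℝ) / ((n : ℝ) + 1) := by
    field_simp
  rw [ge_iff_le, hfin]
  exact hR
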